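/- Let G = (N, A) be a directed graph with source s and sink t, let f be a maximum s-t flow with residual graph D_f, and let U be the set of nodes reachable from s in D_f. If a new arc (i,j) with positive capacity is added where both i ∈ U and j ∈ U, then the value of the maximum s-t flow in the augmented network equals the value of the maximum flow in the original network. -/

import Mathlib

/-- A capacitated directed network: `A` is the arc relation, `u` the capacities
(zero off the arc set). -/
structure FlowNetwork (V : Type*) where
  A : V → V → Prop
  u : V → V → ℝ
  cap_nonneg : ∀ i j, 0 ≤ u i j
  cap_zero : ∀ i j, ¬ A i j → u i j = 0

/-- `f` is a feasible `s`-`t` flow in `N`. -/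
structure IsFlow {V : Type*} [Fintype V] (N : FlowNetwork V) (s t : V)
    (f : V → V → ℝ) : Prop where
  nonneg : ∀ i j, 0 ≤ f i j
  le_cap : ∀ i j, f i j ≤ N.u i j
  conserve : ∀ v, v ≠ s → v ≠ t → (∑ w, f v w) = (∑ w, f w v)

/-- The value of a flow: the net flow out of the source `s`. -/
noncomputable def flowValue {V : Type*} [Fintype V] (f : V → V → ℝ) (s : V) : ℝ :=
  (∑ w, f s w) - (∑ w, f w s)

/-- `f` is a maximum `s`-`t` flow in `N`. -/
def IsMaxFlow {V : Type*} [Fintype V] (N : FlowNetwork V) (s t : V)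
    (f : V → V → ℝ) : Prop :=
  IsFlow N s t f ∧ ∀ g, IsFlow N s t g → flowValue g s ≤ flowValue f s

/-- Arc of the residual (auxiliary) graph `D_f`: a forward arc where flow is
below capacity, or a backward arc where flow is positive. -/
def ResidualArc {V : Type*} (N : FlowNetwork V) (f : V → V → ℝ) (i j : V) : Prop :=
  (N.A i j ∧ f i j < N.u i j) ∨ (N.A j i ∧ 0 < f j i)

/-- Reachability in the residual graph `D_f`. -/
def Reaches {V : Type*} (N : FlowNetwork V) (f : V → V → ℝ) (a b : V) : Prop :=
  Relation.ReflTransGen (ResidualArc N f) a b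

/-- The network obtained by adding the new arc `(i,j)` with capacity `c`. -/
def addArc {V : Type*} [DecidableEq V] (N : FlowNetwork V) (i j : V) (c : ℝ)
    (hc : 0 ≤ c) : FlowNetwork V where
  A a b := N.A a b ∨ (a = i ∧ b = j)
  u a b := if a = i ∧ b = j then c else N.u a b
  cap_nonneg a b := by
    try dsimp only
    split
    · exact hc
    · exact N.cap_nonneg a b
  cap_zero a b h := by
    try dsimp only
    rw [if_neg (fun hab => h (Or.inr hab))]
    exact N.cap_zero a b (fun hA => h (Or.inl hA))

/-- The network obtained by simultaneously adding the arcs of `I`, arc `a ∈ I`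
getting capacity `c a`. -/
def addArcs {V : Type*} [DecidableEq V] (N : FlowNetwork V) (I : Finset (V × V))
    (c : V × V → ℝ) (hc : ∀ a ∈ I, 0 ≤ c a) : FlowNetwork V where
  A a b := N.A a b ∨ (a, b) ∈ I
  u a b := if (a, b) ∈ I then c (a, b) else N.u a b
  cap_nonneg a b := by
    try dsimp only
    split
    · next h => exact hc _ h
    · exact N.cap_nonneg a b
  cap_zero a b h := by
    try dsimp only
    rw [if_neg (fun hab => h (Or.inr hab))]
    exact N.cap_zero a b (fun hA => h (Or.inl hA))


namespace Stmt1Aux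

open Classical List

variable {V : Type*} (N : FlowNetwork V) (f : V → V → ℝ)

/-- Perturbation coefficient along a path: +1 on forward steps, -1 (reversed) on
backward steps. -/
noncomputable def pert : List V → V → V → ℝ
  | [], _, _ => 0
  | [_], _, _ => 0
  | x :: y :: rest, a, b =>
      (if N.A x y ∧ f x y < N.u x y then
         (if a = x ∧ b = y then (1:ℝ) else 0)
       else (if a = y ∧ b = x then (-1:ℝ) else 0)) + pert (y :: rest) a b

lemma pert_le (l : List V) (a b : V) : pert N f l a b ≤ l.length := by
  induction l with
  | nil => simp [pert]
  | cons x rest ih =>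
    cases rest with
    | nil => simp [pert]
    | cons y rest' =>
      have h := ih
      simp only [pert, List.length_cons] at *
      split_ifs <;> push_cast at h ⊢ <;> linarith

lemma le_pert (l : List V) (a b : V) : -(l.length : ℝ) ≤ pert N f l a b := by
  induction l with
  | nil => simp [pert]
  | cons x rest ih =>
    cases rest with
    | nil => simp [pert]
    | cons y rest' =>
      have h := ih
      simp only [pert, List.length_cons] at *
      split_ifs <;> push_cast at h ⊢ <;> linarith

lemma pert_pos (l : List V) (a b : V) (h : 0 < pert N f l a b) :
    N.A a b ∧ f a b < N.u a b := by
  induction l with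
  | nil => simp [pert] at h
  | cons x rest ih =>
    cases rest with
    | nil => simp [pert] at h
    | cons y rest' =>
      simp only [pert] at h
      by_cases hp : 0 < pert N f (y :: rest') a b
      · exact ih hp
      · push_neg at hp
        split_ifs at h with h1 h2 h3
        · obtain ⟨ha, hb⟩ := h2; subst ha; subst hb; exact h1
        · linarith
        · linarith
        · linarith

lemma pert_neg (l : List V) (x : V) (hc : List.Chain (ResidualArc N f) x l)
    (a b : V) (h : pert N f (x :: l) a b < 0) :
    N.A a b ∧ 0 < f a b := by
  induction l generalizing x with
  | nil => simp [pert] at h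
  | cons y rest' ih =>
    change List.IsChain _ (x :: y :: rest') at hc
    rw [List.chain_cons] at hc
    obtain ⟨hxy, hc'⟩ := hc
    simp only [pert] at h
    by_cases hp : pert N f (y :: rest') a b < 0
    · exact ih y hc' hp
    · push_neg at hp
      split_ifs at h with h1 h2 h3
      · linarith
      · linarith
      · obtain ⟨ha, hb⟩ := h3; subst ha; subst hb
        rcases hxy with h' | h'
        · exact absurd h' h1
        · exact h'
      · linarith

variable [Fintype V]

lemma pert_div (v : V) (l : List V) (x : V) :
    (∑ w, pert N f (x :: l) v w) - (∑ w, pert N f (x :: l) w v)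
      = (if v = x then (1:ℝ) else 0) - (if v = l.getLastD x then 1 else 0) := by
  induction l generalizing x with
  | nil => simp [pert]
  | cons y rest' ih =>
    have key := ih y
    simp only [pert, Finset.sum_add_distrib, List.getLastD_cons]
    have h1 : (∑ w, (if N.A x y ∧ f x y < N.u x y then
         (if v = x ∧ w = y then (1:ℝ) else 0)
       else (if v = y ∧ w = x then (-1:ℝ) else 0)))
       - (∑ w, (if N.A x y ∧ f x y < N.u x y then
         (if w = x ∧ v = y then (1:ℝ) else 0)
       else (if w = y ∧ v = x then (-1:ℝ) else 0)))
       = (if v = x then (1:ℝ) else 0) - (if v = y then 1 else 0) := by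
      have e1 : ∀ (c : ℝ) (p : Prop) (z : V),
          (∑ w, if p ∧ w = z then c else 0) = if p then c else 0 := by
        intro c p z
        by_cases hp : p <;> simp [hp]
      have e2 : ∀ (c : ℝ) (p : Prop) (z : V),
          (∑ w, if w = z ∧ p then c else 0) = if p then c else 0 := by
        intro c p z
        by_cases hp : p <;> simp [hp]
      by_cases h : N.A x y ∧ f x y < N.u x y
      · simp only [if_pos h]
        rw [e1, e2]
      · simp only [if_neg h]
        rw [e1, e2]
        split_ifs <;> ring
    have h2 := key
    linarith

lemma exists_better {s t : V} (hst : s ≠ t) (hf : IsFlow N s t f)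
    (hr : Reaches N f s t) :
    ∃ g, IsFlow N s t g ∧ flowValue f s < flowValue g s := by
  obtain ⟨l, hchain, hlast⟩ := List.exists_isChain_cons_of_relationReflTransGen hr
  have hlast' : l.getLastD s = t := by
    rw [← List.getLast_eq_getLastD (h := List.cons_ne_nil s l)]
    exact hlast
  set q : V × V → ℝ := fun p =>
    min (if N.A p.1 p.2 ∧ f p.1 p.2 < N.u p.1 p.2 then N.u p.1 p.2 - f p.1 p.2 else 1)
        (if 0 < f p.1 p.2 then f p.1 p.2 else 1) with hq
  have hne : (Finset.univ : Finset (V × V)).Nonempty := ⟨(s, s), Finset.mem_univ _⟩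
  set m : ℝ := Finset.univ.inf' hne q with hm
  have hm_pos : 0 < m := by
    rw [hm, Finset.lt_inf'_iff]
    intro p _
    refine lt_min ?_ ?_
    · split_ifs with h
      · linarith [h.2]
      · norm_num
    · split_ifs with h
      · exact h
      · norm_num
  have hq1 : ∀ a b, N.A a b ∧ f a b < N.u a b → m ≤ N.u a b - f a b := by
    intro a b h
    have h1 : m ≤ q (a, b) := Finset.inf'_le q (Finset.mem_univ _)
    have h2 : q (a, b) ≤ N.u a b - f a b := by
      simp only [hq, if_pos h]
      exact min_le_left _ _
    linarith
  have hq2 : ∀ a b, 0 < f a b → m ≤ f a b := by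
    intro a b h
    have h1 : m ≤ q (a, b) := Finset.inf'_le q (Finset.mem_univ _)
    have h2 : q (a, b) ≤ f a b := by
      simp only [hq]
      refine le_trans (min_le_right _ _) ?_
      rw [if_pos h]
    linarith
  set L : ℝ := (l.length : ℝ) + 1 with hLdef
  have hL : 0 < L := by positivity
  set ε : ℝ := m / L with hεdef
  have hε : 0 < ε := div_pos hm_pos hL
  have hεL : ε * L = m := div_mul_cancel₀ m hL.ne'
  have hlen : ((s :: l).length : ℝ) = L := by
    simp [hLdef]
  have hb1 : ∀ a b, ε * pert N f (s :: l) a b ≤ m := by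
    intro a b
    have h1 : pert N f (s :: l) a b ≤ ((s :: l).length : ℝ) := pert_le N f _ a b
    rw [hlen] at h1
    calc ε * pert N f (s :: l) a b ≤ ε * L := by
          exact mul_le_mul_of_nonneg_left h1 hε.le
      _ = m := hεL
  have hb2 : ∀ a b, -m ≤ ε * pert N f (s :: l) a b := by
    intro a b
    have h1 : -((s :: l).length : ℝ) ≤ pert N f (s :: l) a b := le_pert N f _ a b
    rw [hlen] at h1
    calc -m = ε * (-L) := by rw [mul_neg, hεL]
      _ ≤ ε * pert N f (s :: l) a b := mul_le_mul_of_nonneg_left h1 hε.le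
  set g : V → V → ℝ := fun a b => f a b + ε * pert N f (s :: l) a b with hgdef
  have hgflow : IsFlow N s t g := by
    constructor
    · intro a b
      rcases le_or_gt 0 (pert N f (s :: l) a b) with hp | hp
      · have := mul_nonneg hε.le hp
        have := hf.nonneg a b
        simp only [hgdef]
        linarith
      · obtain ⟨hA, hfpos⟩ := pert_neg N f l s hchain a b hp
        have h2 := hq2 a b hfpos
        have h3 := hb2 a b
        simp only [hgdef]
        linarith
    · intro a b
      rcases le_or_gt (pert N f (s :: l) a b) 0 with hp | hp
      · have := mul_nonpos_of_nonneg_of_nonpos hε.le hp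
        have := hf.le_cap a b
        simp only [hgdef]
        linarith
      · obtain ⟨hA, hlt⟩ := pert_pos N f (s :: l) a b hp
        have h2 := hq1 a b ⟨hA, hlt⟩
        have h3 := hb1 a b
        simp only [hgdef]
        linarith
    · intro v hvs hvt
      have hdiv := pert_div N f v l s
      rw [if_neg hvs, if_neg (hlast' ▸ hvt)] at hdiv
      simp only [hgdef, ← Finset.mul_sum, Finset.sum_add_distrib]
      rw [hf.conserve v hvs hvt]
      have : (∑ w, pert N f (s :: l) v w) = (∑ w, pert N f (s :: l) w v) := by
        linarith
      rw [this]
  refine ⟨g, hgflow, ?_⟩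
  have hdiv := pert_div N f s l s
  rw [if_pos rfl, if_neg (hlast' ▸ hst)] at hdiv
  have hval : flowValue g s = flowValue f s + ε := by
    simp only [flowValue, hgdef, ← Finset.mul_sum, Finset.sum_add_distrib]
    have : (∑ w, pert N f (s :: l) s w) - (∑ w, pert N f (s :: l) w s) = 1 := by
      linarith
    nlinarith [this]
  rw [hval]
  linarith

lemma not_reaches {s t : V} (hst : s ≠ t) (hmax : IsMaxFlow N s t f) :
    ¬ Reaches N f s t := by
  intro hr
  obtain ⟨g, hg, hlt⟩ := exists_better N f hst hmax.1 hr
  exact absurd (hmax.2 g hg) (not_le.2 hlt)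

lemma value_eq_cut [DecidableEq V] (M : FlowNetwork V) (g : V → V → ℝ) {s t : V} (hg : IsFlow M s t g)
    (S : Finset V) (hs : s ∈ S) (ht : t ∉ S) :
    flowValue g s = ∑ a ∈ S, ∑ b ∈ Sᶜ, (g a b - g b a) := by
  have h1 : flowValue g s = ∑ v ∈ S, ((∑ w, g v w) - (∑ w, g w v)) := by
    rw [Finset.sum_eq_single_of_mem s hs]
    · rfl
    · intro v hv hvs
      rw [hg.conserve v hvs (fun h => ht (h ▸ hv))]
      ring
  have h2 : ∀ v, ((∑ w, g v w) - (∑ w, g w v))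
      = (∑ w ∈ S, (g v w - g w v)) + (∑ w ∈ Sᶜ, (g v w - g w v)) := by
    intro v
    rw [Finset.sum_add_sum_compl, ← Finset.sum_sub_distrib]
  have h3 : (∑ v ∈ S, ∑ w ∈ S, (g v w - g w v)) = 0 := by
    simp only [Finset.sum_sub_distrib]
    rw [Finset.sum_comm (s := S) (t := S) (f := fun v w => g v w)]
    exact sub_self _
  rw [h1]
  calc (∑ v ∈ S, ((∑ w, g v w) - (∑ w, g w v)))
      = (∑ v ∈ S, ((∑ w ∈ S, (g v w - g w v)) + (∑ w ∈ Sᶜ, (g v w - g w v)))) := by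
        exact Finset.sum_congr rfl fun v _ => h2 v
    _ = (∑ v ∈ S, ∑ w ∈ S, (g v w - g w v)) + (∑ v ∈ S, ∑ w ∈ Sᶜ, (g v w - g w v)) :=
        Finset.sum_add_distrib
    _ = ∑ a ∈ S, ∑ b ∈ Sᶜ, (g a b - g b a) := by rw [h3, zero_add]

lemma value_le_cut [DecidableEq V] (M : FlowNetwork V) (g : V → V → ℝ) {s t : V} (hg : IsFlow M s t g)
    (S : Finset V) (hs : s ∈ S) (ht : t ∉ S) :
    flowValue g s ≤ ∑ a ∈ S, ∑ b ∈ Sᶜ, M.u a b := by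
  rw [value_eq_cut M g hg S hs ht]
  refine Finset.sum_le_sum fun a _ => Finset.sum_le_sum fun b _ => ?_
  have := hg.le_cap a b
  have := hg.nonneg b a
  linarith

end Stmt1Aux

/-- adding a single arc `(i,j)` with positive capacity where both
endpoints are reachable from `s` in the residual graph of a maximum flow `f`
does not change the maximum flow value. -/
theorem stmt1 {V : Type*} [Fintype V] [DecidableEq V]
    (N : FlowNetwork V) (s t : V) (hst : s ≠ t)
    (f : V → V → ℝ) (hf : IsMaxFlow N s t f)
    (i j : V) (hij : ¬ N.A i j) (c : ℝ) (hc : 0 < c)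
    (hi : Reaches N f s i) (hj : Reaches N f s j)
    (f' : V → V → ℝ) (hf' : IsMaxFlow (addArc N i j c hc.le) s t f') :
    flowValue f' s = flowValue f s := by
  haveI : DecidablePred (Reaches N f s) := fun _ => Classical.propDecidable _
  set N' := addArc N i j c hc.le with hN'
  set S : Finset V := Finset.univ.filter (fun v => Reaches N f s v) with hS
  have hmemS : ∀ v, v ∈ S ↔ Reaches N f s v := by
    intro v; simp [hS]
  have hsS : s ∈ S := (hmemS s).2 Relation.ReflTransGen.refl
  have htS : t ∉ S := fun h => Stmt1Aux.not_reaches N f hst hf ((hmemS t).1 h)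
  have hjS : j ∈ S := (hmemS j).2 hj
  have hclosed : ∀ a b, a ∈ S → ResidualArc N f a b → b ∈ S :=
    fun a b ha harc => (hmemS b).2 (Relation.ReflTransGen.tail ((hmemS a).1 ha) harc)
  have hfN' : IsFlow N' s t f := by
    refine ⟨hf.1.nonneg, ?_, hf.1.conserve⟩
    intro a b
    show f a b ≤ (if a = i ∧ b = j then c else N.u a b)
    split_ifs with h
    · obtain ⟨rfl, rfl⟩ := h
      have h0 := N.cap_zero _ _ hij
      have h1 := hf.1.le_cap a b
      linarith
    · exact hf.1.le_cap a b
  have hle1 : flowValue f s ≤ flowValue f' s := hf'.2 f hfN'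
  have hcutS : ∀ a ∈ S, ∀ b ∈ Sᶜ, N'.u a b = N.u a b := by
    intro a _ b hb
    show (if a = i ∧ b = j then c else N.u a b) = N.u a b
    rw [if_neg]
    rintro ⟨_, rfl⟩
    exact (Finset.mem_compl.1 hb) hjS
  have hsat : flowValue f s = ∑ a ∈ S, ∑ b ∈ Sᶜ, N.u a b := by
    rw [Stmt1Aux.value_eq_cut N f hf.1 S hsS htS]
    refine Finset.sum_congr rfl fun a ha => Finset.sum_congr rfl fun b hb => ?_
    have hbS : b ∉ S := Finset.mem_compl.1 hb
    have h1 : f a b = N.u a b := by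
      by_contra hne
      have hlt : f a b < N.u a b := lt_of_le_of_ne (hf.1.le_cap a b) hne
      by_cases hA : N.A a b
      · exact hbS (hclosed a b ha (Or.inl ⟨hA, hlt⟩))
      · have := N.cap_zero a b hA
        have := hf.1.nonneg a b
        have := hf.1.le_cap a b
        exact hne (by linarith)
    have h2 : f b a = 0 := by
      by_contra hne
      have hpos : 0 < f b a := lt_of_le_of_ne (hf.1.nonneg b a) (Ne.symm hne)
      have hA : N.A b a := by
        by_contra hA
        have := N.cap_zero b a hA
        have := hf.1.le_cap b a
        linarith
      exact hbS (hclosed a b ha (Or.inr ⟨hA, hpos⟩))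
    rw [h1, h2]; ring
  have hle2 : flowValue f' s ≤ flowValue f s := by
    have h := Stmt1Aux.value_le_cut N' f' hf'.1 S hsS htS
    have heq : (∑ a ∈ S, ∑ b ∈ Sᶜ, N'.u a b) = ∑ a ∈ S, ∑ b ∈ Sᶜ, N.u a b :=
      Finset.sum_congr rfl fun a ha => Finset.sum_congr rfl fun b hb => hcutS a ha b hb
    rw [heq, ← hsat] at h
    exact h
  linarith
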